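/- Singular reduction of the Rosochatius system yields the same Poisson structure: fix real numbers w_0,…,w_ℓ. On ℝ^{ℓ+1} × ℝ^{ℓ+1} with coordinates (ξ, η), at every point with ξ_σ ≠ 0 for all σ, define V_σ = ξ_σ²/2, T_σ = η_σ²/2 + w_σ/(2ξ_σ²), and S_σ = ξ_σ·η_σ. Then these functions satisfy the Dirac bracket relations (with C1 = ⟨ξ,ξ⟩ = 2∑_σ V_σ): {V_σ, T_τ} = S_τ·(δ_{στ} − 2V_σ/C1), {V_σ, S_τ} = 2V_σ·(δ_{στ} − 2V_τ/C1), {T_σ, S_τ} = −2T_σ·(δ_{στ} − 2V_τ/C1), {T_σ, T_τ} = (2T_σ·S_τ − 2T_τ·S_σ)/C1, {S_σ, S_τ} = 0, and {V_σ, V_τ} = 0, for all σ, τ ∈ {0,…,ℓ}. -/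

import Mathlib

noncomputable section

/-- The canonical Poisson bracket on `T*ℝ^N = ℝ^N × ℝ^N`:
`[f,g] = ∑ ν (∂f/∂x_ν · ∂g/∂y_ν − ∂f/∂y_ν · ∂g/∂x_ν)`. -/
def canPB {N : ℕ} (f g : (Fin N → ℝ) × (Fin N → ℝ) → ℝ)
    (p : (Fin N → ℝ) × (Fin N → ℝ)) : ℝ :=
  ∑ i : Fin N,
    ((fderiv ℝ f p) ((Pi.single i 1 : Fin N → ℝ), 0) *
        (fderiv ℝ g p) (0, (Pi.single i 1 : Fin N → ℝ))
      - (fderiv ℝ f p) (0, (Pi.single i 1 : Fin N → ℝ)) *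
        (fderiv ℝ g p) ((Pi.single i 1 : Fin N → ℝ), 0))

/-- The constraint function `C1(x,y) = ⟨x,x⟩`. -/
def C1fun {N : ℕ} (p : (Fin N → ℝ) × (Fin N → ℝ)) : ℝ := ∑ ν, p.1 ν * p.1 ν

/-- The constraint function `C2(x,y) = ⟨x,y⟩`. -/
def C2fun {N : ℕ} (p : (Fin N → ℝ) × (Fin N → ℝ)) : ℝ := ∑ ν, p.1 ν * p.2 ν

/-- The Dirac bracket
`{f,g} = [f,g] + (1/(2C1))·[f,C1]·[C2,g] − (1/(2C1))·[f,C2]·[C1,g]`. -/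
def diracPB {N : ℕ} (f g : (Fin N → ℝ) × (Fin N → ℝ) → ℝ)
    (p : (Fin N → ℝ) × (Fin N → ℝ)) : ℝ :=
  canPB f g p + (1 / (2 * C1fun p)) * canPB f C1fun p * canPB C2fun g p
    - (1 / (2 * C1fun p)) * canPB f C2fun p * canPB C1fun g p

namespace Aux15

open ContinuousLinearMap

variable {N : ℕ}

abbrev E (N : ℕ) := (Fin N → ℝ) × (Fin N → ℝ)

lemma hx1 (σ : Fin N) (p : E N) :
    HasFDerivAt (fun q : E N => q.1 σ) ((proj σ).comp (fst ℝ (Fin N → ℝ) (Fin N → ℝ))) p :=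
  by have := (hasFDerivAt_apply σ p.1).comp p (hasFDerivAt_fst (𝕜 := ℝ) (p := p)); exact this

lemma hx2 (σ : Fin N) (p : E N) :
    HasFDerivAt (fun q : E N => q.2 σ) ((proj σ).comp (snd ℝ (Fin N → ℝ) (Fin N → ℝ))) p :=
  by have := (hasFDerivAt_apply σ p.2).comp p (hasFDerivAt_snd (𝕜 := ℝ) (p := p)); exact this

lemma L1_apply1 (σ i : Fin N) :
    ((proj σ).comp (fst ℝ (Fin N → ℝ) (Fin N → ℝ))) ((Pi.single i 1 : Fin N → ℝ), 0)
      = if i = σ then 1 else 0 := by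
  simp [Pi.single_apply, eq_comm]

lemma L1_apply2 (σ i : Fin N) :
    ((proj σ).comp (fst ℝ (Fin N → ℝ) (Fin N → ℝ))) ((0 : Fin N → ℝ), (Pi.single i 1 : Fin N → ℝ))
      = 0 := by simp

lemma L2_apply1 (σ i : Fin N) :
    ((proj σ).comp (snd ℝ (Fin N → ℝ) (Fin N → ℝ))) ((Pi.single i 1 : Fin N → ℝ), 0)
      = 0 := by simp

lemma L2_apply2 (σ i : Fin N) :
    ((proj σ).comp (snd ℝ (Fin N → ℝ) (Fin N → ℝ))) ((0 : Fin N → ℝ), (Pi.single i 1 : Fin N → ℝ))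
      = if i = σ then 1 else 0 := by
  simp [Pi.single_apply, eq_comm]

-- V
lemma hasF_V (σ : Fin N) (p : E N) :
    HasFDerivAt (fun q : E N => q.1 σ ^ 2 / 2)
      (((2:ℕ) * p.1 σ ^ (2-1) / 2) • ((proj σ).comp (fst ℝ (Fin N → ℝ) (Fin N → ℝ)))) p :=
  by have := ((hasDerivAt_pow 2 (p.1 σ)).div_const 2).comp_hasFDerivAt p (hx1 σ p); exact this

lemma dV1 (σ i : Fin N) (p : E N) :
    fderiv ℝ (fun q : E N => q.1 σ ^ 2 / 2) p ((Pi.single i 1 : Fin N → ℝ), 0)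
      = if i = σ then p.1 σ else 0 := by
  rw [(hasF_V σ p).fderiv]
  simp only [smul_apply, smul_eq_mul, L1_apply1]
  rcases eq_or_ne i σ with rfl | h
  · simp
  · simp [h]

lemma dV2 (σ i : Fin N) (p : E N) :
    fderiv ℝ (fun q : E N => q.1 σ ^ 2 / 2) p ((0 : Fin N → ℝ), (Pi.single i 1 : Fin N → ℝ))
      = 0 := by
  rw [(hasF_V σ p).fderiv]
  simp only [smul_apply, smul_eq_mul, L1_apply2, mul_zero]

-- S
lemma hasF_S (σ : Fin N) (p : E N) :
    HasFDerivAt (fun q : E N => q.1 σ * q.2 σ)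
      (p.1 σ • ((proj σ).comp (snd ℝ (Fin N → ℝ) (Fin N → ℝ)))
        + p.2 σ • ((proj σ).comp (fst ℝ (Fin N → ℝ) (Fin N → ℝ)))) p :=
  (hx1 σ p).mul (hx2 σ p)

lemma dS1 (σ i : Fin N) (p : E N) :
    fderiv ℝ (fun q : E N => q.1 σ * q.2 σ) p ((Pi.single i 1 : Fin N → ℝ), 0)
      = if i = σ then p.2 σ else 0 := by
  rw [(hasF_S σ p).fderiv]
  simp only [add_apply, smul_apply, smul_eq_mul, L1_apply1, L2_apply1]
  rcases eq_or_ne i σ with rfl | h <;> simp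

lemma dS2 (σ i : Fin N) (p : E N) :
    fderiv ℝ (fun q : E N => q.1 σ * q.2 σ) p ((0 : Fin N → ℝ), (Pi.single i 1 : Fin N → ℝ))
      = if i = σ then p.1 σ else 0 := by
  rw [(hasF_S σ p).fderiv]
  simp only [add_apply, smul_apply, smul_eq_mul, L1_apply2, L2_apply2]
  rcases eq_or_ne i σ with rfl | h <;> simp

-- T
lemma hasF_T (σ : Fin N) (p : E N) (w : ℝ) (h : p.1 σ ≠ 0) :
    HasFDerivAt (fun q : E N => q.2 σ ^ 2 / 2 + w / (2 * q.1 σ ^ 2))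
      ((((2:ℕ) * p.2 σ ^ (2-1) / 2) • ((proj σ).comp (snd ℝ (Fin N → ℝ) (Fin N → ℝ))))
        + (((0 * (2 * p.1 σ ^ 2) - w * (2 * ((2:ℕ) * p.1 σ ^ (2-1)))) / (2 * p.1 σ ^ 2) ^ 2)
            • ((proj σ).comp (fst ℝ (Fin N → ℝ) (Fin N → ℝ))))) p := by
  have h2 : (2 : ℝ) * p.1 σ ^ 2 ≠ 0 := by positivity
  have ha := ((hasDerivAt_pow 2 (p.2 σ)).div_const 2).comp_hasFDerivAt p (hx2 σ p)
  have hb := ((hasDerivAt_const (p.1 σ) w).div ((hasDerivAt_pow 2 (p.1 σ)).const_mul 2)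
        h2).comp_hasFDerivAt p (hx1 σ p)
  exact HasFDerivAt.add ha hb

lemma dT1 (σ i : Fin N) (p : E N) (w : ℝ) (h : p.1 σ ≠ 0) :
    fderiv ℝ (fun q : E N => q.2 σ ^ 2 / 2 + w / (2 * q.1 σ ^ 2)) p
        ((Pi.single i 1 : Fin N → ℝ), 0)
      = if i = σ then -w / p.1 σ ^ 3 else 0 := by
  rw [(hasF_T σ p w h).fderiv]
  simp only [add_apply, smul_apply, smul_eq_mul, L1_apply1, L2_apply1]
  rcases eq_or_ne i σ with rfl | hne
  · simp only [if_pos rfl, ↓reduceIte, mul_one, mul_zero, zero_add]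
    field_simp
    ring
  · simp [hne]

lemma dT2 (σ i : Fin N) (p : E N) (w : ℝ) (h : p.1 σ ≠ 0) :
    fderiv ℝ (fun q : E N => q.2 σ ^ 2 / 2 + w / (2 * q.1 σ ^ 2)) p
        ((0 : Fin N → ℝ), (Pi.single i 1 : Fin N → ℝ))
      = if i = σ then p.2 σ else 0 := by
  rw [(hasF_T σ p w h).fderiv]
  simp only [add_apply, smul_apply, smul_eq_mul, L1_apply2, L2_apply2]
  rcases eq_or_ne i σ with rfl | hne
  · simp
  · simp [hne]

-- C1, C2
lemma hasF_C1 (p : E N) :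
    HasFDerivAt (C1fun (N := N))
      (∑ ν : Fin N, (p.1 ν • ((proj ν).comp (fst ℝ (Fin N → ℝ) (Fin N → ℝ)))
        + p.1 ν • ((proj ν).comp (fst ℝ (Fin N → ℝ) (Fin N → ℝ))))) p :=
  by have := HasFDerivAt.fun_sum (u := Finset.univ) fun ν _ => (hx1 ν p).mul (hx1 ν p); exact this

lemma dC1_1 (i : Fin N) (p : E N) :
    fderiv ℝ (C1fun (N := N)) p ((Pi.single i 1 : Fin N → ℝ), 0) = 2 * p.1 i := by
  rw [(hasF_C1 p).fderiv]
  rw [ContinuousLinearMap.sum_apply]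
  simp only [add_apply, smul_apply, smul_eq_mul, L1_apply1]
  rw [Finset.sum_eq_single i]
  · simp; ring
  · intro b _ hb
    simp [Ne.symm hb]
  · simp

lemma dC1_2 (i : Fin N) (p : E N) :
    fderiv ℝ (C1fun (N := N)) p ((0 : Fin N → ℝ), (Pi.single i 1 : Fin N → ℝ)) = 0 := by
  rw [(hasF_C1 p).fderiv]
  rw [ContinuousLinearMap.sum_apply]
  simp only [add_apply, smul_apply, smul_eq_mul, L1_apply2, mul_zero, add_zero]
  simp

lemma hasF_C2 (p : E N) :
    HasFDerivAt (C2fun (N := N))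
      (∑ ν : Fin N, (p.1 ν • ((proj ν).comp (snd ℝ (Fin N → ℝ) (Fin N → ℝ)))
        + p.2 ν • ((proj ν).comp (fst ℝ (Fin N → ℝ) (Fin N → ℝ))))) p :=
  by have := HasFDerivAt.fun_sum (u := Finset.univ) fun ν _ => (hx1 ν p).mul (hx2 ν p); exact this

lemma dC2_1 (i : Fin N) (p : E N) :
    fderiv ℝ (C2fun (N := N)) p ((Pi.single i 1 : Fin N → ℝ), 0) = p.2 i := by
  rw [(hasF_C2 p).fderiv]
  rw [ContinuousLinearMap.sum_apply]
  simp only [add_apply, smul_apply, smul_eq_mul, L1_apply1, L2_apply1, mul_zero, zero_add]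
  rw [Finset.sum_eq_single i] <;> simp +contextual [Ne.symm]

lemma dC2_2 (i : Fin N) (p : E N) :
    fderiv ℝ (C2fun (N := N)) p ((0 : Fin N → ℝ), (Pi.single i 1 : Fin N → ℝ)) = p.1 i := by
  rw [(hasF_C2 p).fderiv]
  rw [ContinuousLinearMap.sum_apply]
  simp only [add_apply, smul_apply, smul_eq_mul, L1_apply2, L2_apply2, mul_zero, add_zero]
  rw [Finset.sum_eq_single i] <;> simp +contextual [Ne.symm]

-- canPB tools
lemma canPB_antisymm (f g : E N → ℝ) (p : E N) : canPB f g p = -canPB g f p := by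
  unfold canPB
  rw [← Finset.sum_neg_distrib]
  exact Finset.sum_congr rfl fun i _ => by ring

lemma canPB_left_single (f g : E N → ℝ) (σ : Fin N) (p : E N)
    (h1 : ∀ i, i ≠ σ → fderiv ℝ f p ((Pi.single i 1 : Fin N → ℝ), 0) = 0)
    (h2 : ∀ i, i ≠ σ → fderiv ℝ f p ((0 : Fin N → ℝ), (Pi.single i 1 : Fin N → ℝ)) = 0) :
    canPB f g p
      = fderiv ℝ f p ((Pi.single σ 1 : Fin N → ℝ), 0)
          * fderiv ℝ g p ((0 : Fin N → ℝ), (Pi.single σ 1 : Fin N → ℝ))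
        - fderiv ℝ f p ((0 : Fin N → ℝ), (Pi.single σ 1 : Fin N → ℝ))
          * fderiv ℝ g p ((Pi.single σ 1 : Fin N → ℝ), 0) := by
  unfold canPB
  rw [Finset.sum_eq_single σ]
  · intro b _ hb
    rw [h1 b hb, h2 b hb]; ring
  · simp


section Values

variable {N : ℕ} (p : E N) (σ τ : Fin N) (w : ℝ)

lemma canVT (hτ : p.1 τ ≠ 0) :
    canPB (fun q : E N => q.1 σ ^ 2 / 2)
        (fun q : E N => q.2 τ ^ 2 / 2 + w / (2 * q.1 τ ^ 2)) p
      = if σ = τ then p.1 τ * p.2 τ else 0 := by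
  rw [canPB_left_single _ _ σ p (fun i hi => by rw [dV1]; simp [hi])
      (fun i _ => dV2 σ i p)]
  rw [dV1, dV2, dT1 τ σ p w hτ, dT2 τ σ p w hτ]
  rcases eq_or_ne σ τ with rfl | h
  · simp; try ring
  · simp [h]

lemma canVS :
    canPB (fun q : E N => q.1 σ ^ 2 / 2) (fun q : E N => q.1 τ * q.2 τ) p
      = if σ = τ then p.1 τ * p.1 τ else 0 := by
  rw [canPB_left_single _ _ σ p (fun i hi => by rw [dV1]; simp [hi])
      (fun i _ => dV2 σ i p)]
  rw [dV1, dV2, dS1, dS2]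
  rcases eq_or_ne σ τ with rfl | h
  · simp; try ring
  · simp [h]

lemma canVV :
    canPB (fun q : E N => q.1 σ ^ 2 / 2) (fun q : E N => q.1 τ ^ 2 / 2) p = 0 := by
  rw [canPB_left_single _ _ σ p (fun i hi => by rw [dV1]; simp [hi])
      (fun i _ => dV2 σ i p)]
  rw [dV1, dV2, dV1, dV2]
  simp

lemma canTT (w' : ℝ) (hw : σ = τ → w = w') (hσ : p.1 σ ≠ 0) (hτ : p.1 τ ≠ 0) :
    canPB (fun q : E N => q.2 σ ^ 2 / 2 + w / (2 * q.1 σ ^ 2))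
        (fun q : E N => q.2 τ ^ 2 / 2 + w' / (2 * q.1 τ ^ 2)) p = 0 := by
  rw [canPB_left_single _ _ σ p (fun i hi => by rw [dT1 σ i p w hσ]; simp [hi])
      (fun i hi => by rw [dT2 σ i p w hσ]; simp [hi])]
  rw [dT1 σ σ p w hσ, dT2 σ σ p w hσ, dT1 τ σ p w' hτ, dT2 τ σ p w' hτ]
  rcases eq_or_ne σ τ with rfl | h
  · rw [← hw rfl]; simp; ring
  · simp [h]

lemma canTS (hσ : p.1 σ ≠ 0) :
    canPB (fun q : E N => q.2 σ ^ 2 / 2 + w / (2 * q.1 σ ^ 2))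
        (fun q : E N => q.1 τ * q.2 τ) p
      = if σ = τ then -w / p.1 σ ^ 3 * p.1 σ - p.2 σ * p.2 σ else 0 := by
  rw [canPB_left_single _ _ σ p (fun i hi => by rw [dT1 σ i p w hσ]; simp [hi])
      (fun i hi => by rw [dT2 σ i p w hσ]; simp [hi])]
  rw [dT1 σ σ p w hσ, dT2 σ σ p w hσ, dS1, dS2]
  rcases eq_or_ne σ τ with rfl | h
  · simp; try ring
  · simp [h]

lemma canSS :
    canPB (fun q : E N => q.1 σ * q.2 σ) (fun q : E N => q.1 τ * q.2 τ) p = 0 := by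
  rw [canPB_left_single _ _ σ p (fun i hi => by rw [dS1]; simp [hi])
      (fun i hi => by rw [dS2]; simp [hi])]
  rw [dS1, dS2, dS1, dS2]
  rcases eq_or_ne σ τ with rfl | h
  · simp; try ring
  · simp [h]

lemma canVC1 :
    canPB (fun q : E N => q.1 σ ^ 2 / 2) (C1fun (N := N)) p = 0 := by
  rw [canPB_left_single _ _ σ p (fun i hi => by rw [dV1]; simp [hi])
      (fun i _ => dV2 σ i p)]
  rw [dV1, dV2, dC1_1, dC1_2]
  simp

lemma canVC2 :
    canPB (fun q : E N => q.1 σ ^ 2 / 2) (C2fun (N := N)) p = p.1 σ * p.1 σ := by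
  rw [canPB_left_single _ _ σ p (fun i hi => by rw [dV1]; simp [hi])
      (fun i _ => dV2 σ i p)]
  rw [dV1, dV2, dC2_1, dC2_2]
  simp

lemma canTC1 (hσ : p.1 σ ≠ 0) :
    canPB (fun q : E N => q.2 σ ^ 2 / 2 + w / (2 * q.1 σ ^ 2)) (C1fun (N := N)) p
      = -(p.2 σ * (2 * p.1 σ)) := by
  rw [canPB_left_single _ _ σ p (fun i hi => by rw [dT1 σ i p w hσ]; simp [hi])
      (fun i hi => by rw [dT2 σ i p w hσ]; simp [hi])]
  rw [dT1 σ σ p w hσ, dT2 σ σ p w hσ, dC1_1, dC1_2]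
  simp

lemma canTC2 (hσ : p.1 σ ≠ 0) :
    canPB (fun q : E N => q.2 σ ^ 2 / 2 + w / (2 * q.1 σ ^ 2)) (C2fun (N := N)) p
      = -w / p.1 σ ^ 3 * p.1 σ - p.2 σ * p.2 σ := by
  rw [canPB_left_single _ _ σ p (fun i hi => by rw [dT1 σ i p w hσ]; simp [hi])
      (fun i hi => by rw [dT2 σ i p w hσ]; simp [hi])]
  rw [dT1 σ σ p w hσ, dT2 σ σ p w hσ, dC2_1, dC2_2]
  simp

lemma canSC1 :
    canPB (fun q : E N => q.1 σ * q.2 σ) (C1fun (N := N)) p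
      = -(p.1 σ * (2 * p.1 σ)) := by
  rw [canPB_left_single _ _ σ p (fun i hi => by rw [dS1]; simp [hi])
      (fun i hi => by rw [dS2]; simp [hi])]
  rw [dS1, dS2, dC1_1, dC1_2]
  simp

lemma canSC2 :
    canPB (fun q : E N => q.1 σ * q.2 σ) (C2fun (N := N)) p = 0 := by
  rw [canPB_left_single _ _ σ p (fun i hi => by rw [dS1]; simp [hi])
      (fun i hi => by rw [dS2]; simp [hi])]
  rw [dS1, dS2, dC2_1, dC2_2]
  simp [mul_comm]

end Values

end Aux15

open Aux15

/-- **Singular reduction of the Rosochatius system yields the same Poisson structure.**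
On `ℝ^{ℓ+1} × ℝ^{ℓ+1}` with coordinates `(ξ,η)`, fix `w_0,…,w_ℓ ∈ ℝ` and set
`V_σ = ξ_σ²/2`, `T_σ = η_σ²/2 + w_σ/(2ξ_σ²)`, `S_σ = ξ_σ·η_σ`.  At every point with
`ξ_σ ≠ 0` for all `σ`, these functions satisfy the Dirac bracket relations of the
singularly reduced degenerate Neumann system. -/
theorem stmt15 (ℓ : ℕ) (w : Fin (ℓ + 1) → ℝ)
    (V T S : Fin (ℓ + 1) → (Fin (ℓ + 1) → ℝ) × (Fin (ℓ + 1) → ℝ) → ℝ)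
    (hV : V = fun σ q => q.1 σ ^ 2 / 2)
    (hT : T = fun σ q => q.2 σ ^ 2 / 2 + w σ / (2 * q.1 σ ^ 2))
    (hS : S = fun σ q => q.1 σ * q.2 σ)
    (p : (Fin (ℓ + 1) → ℝ) × (Fin (ℓ + 1) → ℝ))
    (hp : ∀ σ, p.1 σ ≠ 0) (σ τ : Fin (ℓ + 1)) :
    diracPB (V σ) (T τ) p
      = S τ p * ((if σ = τ then 1 else 0) - 2 * V σ p / C1fun p) ∧
    diracPB (V σ) (S τ) p
      = 2 * V σ p * ((if σ = τ then 1 else 0) - 2 * V τ p / C1fun p) ∧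
    diracPB (T σ) (S τ) p
      = -(2 * T σ p) * ((if σ = τ then 1 else 0) - 2 * V τ p / C1fun p) ∧
    diracPB (T σ) (T τ) p
      = (2 * T σ p * S τ p - 2 * T τ p * S σ p) / C1fun p ∧
    diracPB (S σ) (S τ) p = 0 ∧
    diracPB (V σ) (V τ) p = 0 := by
  subst hV hT hS
  have hc : (0:ℝ) < C1fun p :=
    Finset.sum_pos (fun ν _ => mul_self_pos.mpr (hp ν)) Finset.univ_nonempty
  have hc' : C1fun p ≠ 0 := ne_of_gt hc
  have hσ := hp σ
  have hτ := hp τ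
  simp only []
  refine ⟨?_, ?_, ?_, ?_, ?_, ?_⟩
  · rw [diracPB, canVT p σ τ (w τ) hτ, canVC1, canVC2,
      canPB_antisymm C2fun, canTC2 p τ (w τ) hτ,
      canPB_antisymm C1fun, canTC1 p τ (w τ) hτ]
    rcases eq_or_ne σ τ with rfl | h
    · simp only [if_pos rfl, ↓reduceIte]; field_simp; ring
    · simp only [if_neg h]; field_simp; ring
  · rw [diracPB, canVS, canVC1, canVC2,
      canPB_antisymm C2fun, canSC2, canPB_antisymm C1fun, canSC1]
    rcases eq_or_ne σ τ with rfl | h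
    · simp only [if_pos rfl, ↓reduceIte]; field_simp; ring
    · simp only [if_neg h]; field_simp; ring
  · rw [diracPB, canTS p σ τ (w σ) hσ, canTC1 p σ (w σ) hσ, canTC2 p σ (w σ) hσ,
      canPB_antisymm C2fun, canSC2, canPB_antisymm C1fun, canSC1]
    rcases eq_or_ne σ τ with rfl | h
    · simp only [if_pos rfl, ↓reduceIte]; field_simp; ring
    · simp only [if_neg h]; field_simp; ring
  · rw [diracPB, canTT p σ τ (w σ) (w τ) (fun h => by rw [h]) hσ hτ, canTC1 p σ (w σ) hσ, canTC2 p σ (w σ) hσ,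
      canPB_antisymm C2fun, canTC2 p τ (w τ) hτ, canPB_antisymm C1fun, canTC1 p τ (w τ) hτ]
    field_simp
    ring
  · rw [diracPB, canSS, canSC1, canSC2,
      canPB_antisymm C2fun, canSC2, canPB_antisymm C1fun, canSC1]
    ring
  · rw [diracPB, canVV, canVC1, canVC2,
      canPB_antisymm C2fun, canVC2, canPB_antisymm C1fun, canVC1]
    ring
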